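/- The reciprocal distance Laplacian spectrum of the complete split graph CS(n,α) is {0, n^{(n−α)}, (n − α/2)^{(α−1)}}. -/

import Mathlib

open Matrix Polynomial

/-- The reciprocal distance (Harary) matrix of a graph: `(i,j)`-entry is `1/d(i,j)`
for `i ≠ j` and `0` on the diagonal. -/
noncomputable def RD {V : Type*} [Fintype V] [DecidableEq V] (G : SimpleGraph V) :
    Matrix V V ℝ :=
  fun u v => if u = v then 0 else ((G.dist u v : ℝ))⁻¹

/-- The reciprocal distance degree of a vertex: `RTr(v) = ∑_{u ≠ v} 1/d(v,u)`. -/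
noncomputable def RTr {V : Type*} [Fintype V] [DecidableEq V] (G : SimpleGraph V) (v : V) : ℝ :=
  ∑ u, RD G v u

/-- The reciprocal distance Laplacian matrix `RD^L(G) = RT(G) - RD(G)`. -/
noncomputable def RDL {V : Type*} [Fintype V] [DecidableEq V] (G : SimpleGraph V) :
    Matrix V V ℝ :=
  Matrix.diagonal (RTr G) - RD G

/-- `e : Fin n → ℝ` enumerates the eigenvalues of `M` in (weakly) decreasing order,
with multiplicities, where the eigenvalues (with multiplicity) are the roots of the
characteristic polynomial. -/
def IsEigEnum {V : Type*} [Fintype V] [DecidableEq V] (M : Matrix V V ℝ)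
    (e : Fin (Fintype.card V) → ℝ) : Prop :=
  Antitone e ∧ (↑(List.ofFn e) : Multiset ℝ) = M.charpoly.roots

/-- The complete split graph `CS(n, α)`: an independent set on the last `α` vertices,
each adjacent to every vertex of a clique on the first `n - α` vertices. -/
def completeSplitGraph (n α : ℕ) : SimpleGraph (Fin n) where
  Adj u v := u ≠ v ∧ ((u : ℕ) < n - α ∨ (v : ℕ) < n - α)
  symm := by
    constructor
    intro u v h
    exact ⟨h.1.symm, h.2.symm⟩
  loopless := by
    constructor
    intro u h
    exact h.1 rfl

/- ######################################################################### -/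
/- Auxiliary development                                                      -/
/- ######################################################################### -/

open Finset

set_option linter.unusedSectionVars false
set_option maxHeartbeats 1600000

noncomputable def Mm (n α : ℕ) : Matrix (Fin n) (Fin n) ℝ := fun u v =>
  if u = v then (if (u:ℕ) < n - α then (n:ℝ) - 1 else ((n:ℝ) - α) + ((α:ℝ) - 1)/2)
  else if (u:ℕ) < n - α ∨ (v:ℕ) < n - α then -1 else -(1/2)

noncomputable def Pm (n α : ℕ) : Matrix (Fin n) (Fin n) ℝ := fun u c =>
  if (c:ℕ) = 0 then 1
  else if (c:ℕ) < n - α then (if u = c then 1 else if (u:ℕ) = 0 then -1 else 0)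
  else if (c:ℕ) = n - α then (if (u:ℕ) < n - α then (α:ℝ) else -((n:ℝ) - α))
  else (if u = c then 1 else if (u:ℕ) = n - α then -1 else 0)

noncomputable def Qm (n α : ℕ) : Matrix (Fin n) (Fin n) ℝ := fun r v =>
  if (r:ℕ) = 0 then 1/n
  else if (r:ℕ) < n - α then (if (v:ℕ) < n - α then (if v = r then 1 else 0) - 1/((n:ℝ) - α) else 0)
  else if (r:ℕ) = n - α then (if (v:ℕ) < n - α then 1/((n:ℝ)*((n:ℝ) - α)) else -(1/((n:ℝ)*α)))
  else (if (v:ℕ) < n - α then 0 else (if v = r then 1 else 0) - 1/(α:ℝ))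

noncomputable def dvec (n α : ℕ) : Fin n → ℝ := fun c =>
  if (c:ℕ) = 0 then 0 else if (c:ℕ) ≤ n - α then n else (n:ℝ) - (α:ℝ)/2

section CountingTools
variable {n : ℕ}

lemma card_filter_lt (k : ℕ) (hk : k < n) :
    (univ.filter fun v : Fin n => (v:ℕ) < k).card = k := by
  have h : (univ.filter fun v : Fin n => (v:ℕ) < k) = Finset.Iio ⟨k, hk⟩ := by
    ext v; simp [Fin.lt_def]
  rw [h, Fin.card_Iio]

lemma card_filter_not_lt (k : ℕ) (hk : k < n) :
    (univ.filter fun v : Fin n => ¬ (v:ℕ) < k).card = n - k := by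
  have := Finset.card_filter_add_card_filter_not (s := (univ : Finset (Fin n)))
    (p := fun v : Fin n => (v:ℕ) < k)
  rw [card_filter_lt k hk] at this
  have hcard : (univ : Finset (Fin n)).card = n := by simp
  omega

lemma sum_delta_const (s : Finset (Fin n)) (w : Fin n) (hw : w ∈ s) (a b : ℝ) :
    ∑ v ∈ s, (if v = w then a else b) = a + ((s.card : ℝ) - 1) * b := by
  rw [← Finset.add_sum_erase _ _ hw, if_pos rfl]
  rw [Finset.sum_congr rfl (fun v hv => if_neg (Finset.mem_erase.mp hv).1),
    Finset.sum_const, Finset.card_erase_of_mem hw, nsmul_eq_mul]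
  have : 1 ≤ s.card := Finset.card_pos.mpr ⟨w, hw⟩
  rw [Nat.cast_sub this]
  norm_num

lemma sum_delta_const' (s : Finset (Fin n)) (w : Fin n) (hw : w ∉ s) (a b : ℝ) :
    ∑ v ∈ s, (if v = w then a else b) = (s.card : ℝ) * b := by
  rw [Finset.sum_congr rfl (fun v hv => if_neg (fun h => hw (by rw [← h]; exact hv))),
    Finset.sum_const, nsmul_eq_mul]

end CountingTools

section Dist
variable {n α : ℕ} (hα : 1 ≤ α) (hαn : α < n)

lemma csg_dist_one {u v : Fin n} (huv : u ≠ v) (h : (u:ℕ) < n - α ∨ (v:ℕ) < n - α) :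
    (completeSplitGraph n α).dist u v = 1 :=
  (SimpleGraph.dist_eq_one_iff_adj).mpr ⟨huv, h⟩

include hα hαn in
lemma csg_dist_two {u v : Fin n} (huv : u ≠ v) (hu : ¬ (u:ℕ) < n - α) (hv : ¬ (v:ℕ) < n - α) :
    (completeSplitGraph n α).dist u v = 2 := by
  have hk : 1 ≤ n - α := by omega
  have hn : 0 < n := by omega
  set G := completeSplitGraph n α
  let w0 : Fin n := ⟨0, hn⟩
  have h1 : G.Adj u w0 := ⟨by intro h; rw [h] at hu; exact hu hk, Or.inr hk⟩
  have h2 : G.Adj w0 v := ⟨by intro h; rw [← h] at hv; exact hv hk, Or.inl hk⟩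
  have hle : G.dist u v ≤ 2 := by
    have := SimpleGraph.dist_le (SimpleGraph.Walk.cons h1 (SimpleGraph.Walk.cons h2 SimpleGraph.Walk.nil))
    simpa using this
  have hpos : 0 < G.dist u v := SimpleGraph.Reachable.pos_dist_of_ne
    ⟨SimpleGraph.Walk.cons h1 (SimpleGraph.Walk.cons h2 SimpleGraph.Walk.nil)⟩ huv
  have hne1 : G.dist u v ≠ 1 := by
    intro h
    have := (SimpleGraph.dist_eq_one_iff_adj).mp h
    exact (not_or.mpr ⟨hu, hv⟩) this.2
  omega

include hα hαn in
lemma RD_csg (u v : Fin n) : RD (completeSplitGraph n α) u v =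
    if u = v then 0 else if (u:ℕ) < n - α ∨ (v:ℕ) < n - α then 1 else 1/2 := by
  unfold RD
  by_cases huv : u = v
  · simp [huv]
  · simp only [if_neg huv]
    by_cases h : (u:ℕ) < n - α ∨ (v:ℕ) < n - α
    · rw [if_pos h, csg_dist_one huv h]; norm_num
    · have h' := not_or.mp h
      rw [if_neg h, csg_dist_two hα hαn huv h'.1 h'.2]; norm_num

include hα hαn in
lemma RTr_csg (v : Fin n) : RTr (completeSplitGraph n α) v =
    if (v:ℕ) < n - α then (n:ℝ) - 1 else ((n:ℝ) - α) + ((α:ℝ) - 1)/2 := by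
  unfold RTr
  have hk : n - α < n := by omega
  by_cases hv : (v:ℕ) < n - α
  · rw [if_pos hv]
    have key : ∀ u : Fin n, RD (completeSplitGraph n α) v u = if v = u then 0 else 1 := by
      intro u
      rw [RD_csg hα hαn]
      by_cases h : v = u
      · simp [h]
      · simp [h, hv]
    simp only [key]
    rw [← Finset.add_sum_erase _ _ (Finset.mem_univ v), if_pos rfl, zero_add]
    rw [Finset.sum_congr rfl (fun u hu => by
      rw [if_neg (fun h => (Finset.mem_erase.mp hu).1 h.symm)]),
      Finset.sum_const, Finset.card_erase_of_mem (Finset.mem_univ v), Finset.card_univ,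
      Fintype.card_fin, nsmul_eq_mul, mul_one, Nat.cast_sub (by omega : 1 ≤ n)]
    norm_num
  · rw [if_neg hv]
    have key : ∀ u : Fin n, RD (completeSplitGraph n α) v u =
        if (u:ℕ) < n - α then 1 else (if v = u then 0 else 1/2) := by
      intro u
      rw [RD_csg hα hαn]
      by_cases h : v = u
      · rw [if_pos h, ← h, if_neg hv, if_pos rfl]
      · rw [if_neg h, if_neg h]
        by_cases h2 : (u:ℕ) < n - α
        · simp [h2, hv]
        · simp [h2, hv]
    simp only [key]
    rw [← Finset.sum_filter_add_sum_filter_not univ (fun u : Fin n => (u:ℕ) < n - α)]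
    have e1 : ∑ u ∈ univ.filter (fun u : Fin n => (u:ℕ) < n - α),
        (if (u:ℕ) < n - α then (1:ℝ) else (if v = u then 0 else 1/2)) = (n:ℝ) - α := by
      rw [Finset.sum_congr rfl (fun u hu => by rw [if_pos (Finset.mem_filter.mp hu).2]),
        Finset.sum_const, card_filter_lt _ hk, nsmul_eq_mul, mul_one, Nat.cast_sub hαn.le]
    have e2 : ∑ u ∈ univ.filter (fun u : Fin n => ¬ (u:ℕ) < n - α),
        (if (u:ℕ) < n - α then (1:ℝ) else (if v = u then 0 else 1/2)) = ((α:ℝ) - 1)/2 := by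
      rw [Finset.sum_congr rfl (fun u hu => by rw [if_neg (Finset.mem_filter.mp hu).2])]
      have hvmem : v ∈ univ.filter (fun u : Fin n => ¬ (u:ℕ) < n - α) := by
        simp only [Finset.mem_filter, Finset.mem_univ, true_and]; exact hv
      rw [← Finset.add_sum_erase _ _ hvmem, if_pos rfl, zero_add]
      rw [Finset.sum_congr rfl (fun u hu => by
        rw [if_neg (fun h => (Finset.mem_erase.mp hu).1 h.symm)]),
        Finset.sum_const, Finset.card_erase_of_mem hvmem, card_filter_not_lt _ hk]
      have h3 : n - (n - α) = α := by omega
      rw [h3, nsmul_eq_mul, Nat.cast_sub hα]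
      ring
    rw [e1, e2]

include hα hαn in
lemma RDL_eq : RDL (completeSplitGraph n α) = Mm n α := by
  funext u v
  unfold RDL
  rw [Matrix.sub_apply]
  by_cases h : u = v
  · subst h
    rw [Matrix.diagonal_apply_eq, RTr_csg hα hαn, RD_csg hα hαn, if_pos rfl, sub_zero]
    unfold Mm; rw [if_pos rfl]
  · rw [Matrix.diagonal_apply_ne _ h, RD_csg hα hαn, if_neg h, zero_sub]
    unfold Mm; rw [if_neg h]
    by_cases h2 : (u:ℕ) < n - α ∨ (v:ℕ) < n - α
    · rw [if_pos h2, if_pos h2]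
    · rw [if_neg h2, if_neg h2]

end Dist

section ColumnHelpers
variable {n α : ℕ} (hα : 1 ≤ α) (hαn : α < n)

include hα hαn

lemma mulP_col0 (A : Matrix (Fin n) (Fin n) ℝ) (r c : Fin n) (hc : (c:ℕ) = 0) :
    ∑ v, A r v * Pm n α v c = ∑ v, A r v := by
  apply Finset.sum_congr rfl
  intro v _
  unfold Pm
  rw [if_pos hc, mul_one]

lemma mulP_colClique (A : Matrix (Fin n) (Fin n) ℝ) (r c : Fin n)
    (hc0 : (c:ℕ) ≠ 0) (hck : (c:ℕ) < n - α) :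
    ∑ v, A r v * Pm n α v c = A r c - A r ⟨0, by omega⟩ := by
  have key : ∀ v : Fin n, A r v * Pm n α v c =
      (if v = c then A r v else 0) - (if v = (⟨0, by omega⟩ : Fin n) then A r v else 0) := by
    intro v
    unfold Pm
    rw [if_neg hc0, if_pos hck]
    by_cases h1 : v = c
    · have h2 : v ≠ (⟨0, by omega⟩ : Fin n) := by
        intro h; rw [h] at h1; apply hc0; rw [← h1]
      rw [if_pos h1, if_pos h1, if_neg h2, mul_one, sub_zero]
    · rw [if_neg h1, if_neg h1]
      by_cases h2 : (v:ℕ) = 0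
      · have h3 : v = (⟨0, by omega⟩ : Fin n) := by exact Fin.ext h2
        rw [if_pos h2, if_pos h3]; ring
      · have h3 : v ≠ (⟨0, by omega⟩ : Fin n) := by
          intro h; apply h2; rw [h]
        rw [if_neg h2, if_neg h3]; ring
  rw [Finset.sum_congr rfl (fun v _ => key v), Finset.sum_sub_distrib,
    Finset.sum_ite_eq' univ c (fun v => A r v), Finset.sum_ite_eq' univ _ (fun v => A r v)]
  simp

lemma mulP_colIndep (A : Matrix (Fin n) (Fin n) ℝ) (r c : Fin n) (hck : n - α < (c:ℕ)) :
    ∑ v, A r v * Pm n α v c = A r c - A r ⟨n - α, by omega⟩ := by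
  have hc0 : (c:ℕ) ≠ 0 := by omega
  have key : ∀ v : Fin n, A r v * Pm n α v c =
      (if v = c then A r v else 0) - (if v = (⟨n - α, by omega⟩ : Fin n) then A r v else 0) := by
    intro v
    unfold Pm
    rw [if_neg hc0, if_neg (by omega), if_neg (by omega)]
    by_cases h1 : v = c
    · have h2 : v ≠ (⟨n - α, by omega⟩ : Fin n) := by
        intro h; rw [h] at h1; apply absurd h1; intro h1
        have := congrArg Fin.val h1; simp at this; omega
      rw [if_pos h1, if_pos h1, if_neg h2, mul_one, sub_zero]
    · rw [if_neg h1, if_neg h1]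
      by_cases h2 : (v:ℕ) = n - α
      · have h3 : v = (⟨n - α, by omega⟩ : Fin n) := Fin.ext h2
        rw [if_pos h2, if_pos h3]; ring
      · have h3 : v ≠ (⟨n - α, by omega⟩ : Fin n) := by
          intro h; apply h2; rw [h]
        rw [if_neg h2, if_neg h3]; ring
  rw [Finset.sum_congr rfl (fun v _ => key v), Finset.sum_sub_distrib,
    Finset.sum_ite_eq' univ c (fun v => A r v), Finset.sum_ite_eq' univ _ (fun v => A r v)]
  simp

lemma mulP_colMid (A : Matrix (Fin n) (Fin n) ℝ) (r c : Fin n) (hck : (c:ℕ) = n - α) :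
    ∑ v, A r v * Pm n α v c =
      (α:ℝ) * (∑ v ∈ univ.filter (fun v : Fin n => (v:ℕ) < n - α), A r v)
      - ((n:ℝ) - α) * (∑ v ∈ univ.filter (fun v : Fin n => ¬ (v:ℕ) < n - α), A r v) := by
  have hc0 : (c:ℕ) ≠ 0 := by omega
  have key : ∀ v : Fin n, A r v * Pm n α v c =
      if (v:ℕ) < n - α then (α:ℝ) * A r v else -(((n:ℝ) - α) * A r v) := by
    intro v
    unfold Pm
    rw [if_neg hc0, if_neg (by omega), if_pos hck]
    by_cases h : (v:ℕ) < n - α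
    · rw [if_pos h, if_pos h]; ring
    · rw [if_neg h, if_neg h]; ring
  rw [Finset.sum_congr rfl (fun v _ => key v),
    ← Finset.sum_filter_add_sum_filter_not univ (fun v : Fin n => (v:ℕ) < n - α)]
  rw [Finset.sum_congr rfl (fun v hv => if_pos (Finset.mem_filter.mp hv).2),
    Finset.sum_congr (rfl : univ.filter (fun v : Fin n => ¬ (v:ℕ) < n - α) = _)
      (fun v hv => if_neg (Finset.mem_filter.mp hv).2)]
  rw [← Finset.mul_sum, Finset.sum_neg_distrib, ← Finset.mul_sum]
  ring

end ColumnHelpers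

section RowSums
variable {n α : ℕ} (hα : 1 ≤ α) (hαn : α < n)

include hα hαn

lemma Mm_sum_lt (u : Fin n) :
    ∑ v ∈ univ.filter (fun v : Fin n => (v:ℕ) < n - α), Mm n α u v =
      if (u:ℕ) < n - α then (α:ℝ) else -((n:ℝ) - α) := by
  have hk : n - α < n := by omega
  by_cases hu : (u:ℕ) < n - α
  · rw [if_pos hu]
    have key : ∀ v ∈ univ.filter (fun v : Fin n => (v:ℕ) < n - α),
        Mm n α u v = if v = u then (n:ℝ) - 1 else -1 := by
      intro v hv
      have hv' := (Finset.mem_filter.mp hv).2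
      unfold Mm
      rcases eq_or_ne u v with h | h
      · subst h; simp [hu]
      · rw [if_neg h, if_neg (show ¬ v = u from fun e => h e.symm),
          if_pos (Or.inl hu)]
    rw [Finset.sum_congr rfl key,
      sum_delta_const _ u (by simp only [mem_filter, mem_univ, true_and]; exact hu) _ _,
      card_filter_lt _ hk, Nat.cast_sub hαn.le]
    ring
  · rw [if_neg hu]
    have key : ∀ v ∈ univ.filter (fun v : Fin n => (v:ℕ) < n - α),
        Mm n α u v = (-1 : ℝ) := by
      intro v hv
      have hv' := (Finset.mem_filter.mp hv).2
      have h : u ≠ v := fun h => hu (by rw [h]; exact hv')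
      unfold Mm
      rw [if_neg h, if_pos (Or.inr hv')]
    rw [Finset.sum_congr rfl key, Finset.sum_const, card_filter_lt _ hk, nsmul_eq_mul,
      Nat.cast_sub hαn.le]
    ring

lemma Mm_sum_ge (u : Fin n) :
    ∑ v ∈ univ.filter (fun v : Fin n => ¬ (v:ℕ) < n - α), Mm n α u v =
      if (u:ℕ) < n - α then -(α:ℝ) else (n:ℝ) - α := by
  have hk : n - α < n := by omega
  have hcard : (univ.filter (fun v : Fin n => ¬ (v:ℕ) < n - α)).card = α := by
    rw [card_filter_not_lt _ hk]; omega
  by_cases hu : (u:ℕ) < n - α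
  · rw [if_pos hu]
    have key : ∀ v ∈ univ.filter (fun v : Fin n => ¬ (v:ℕ) < n - α),
        Mm n α u v = (-1 : ℝ) := by
      intro v hv
      have hv' := (Finset.mem_filter.mp hv).2
      have h : u ≠ v := fun h => hv' (by rw [← h]; exact hu)
      unfold Mm
      rw [if_neg h, if_pos (Or.inl hu)]
    rw [Finset.sum_congr rfl key, Finset.sum_const, hcard, nsmul_eq_mul]
    ring
  · rw [if_neg hu]
    have key : ∀ v ∈ univ.filter (fun v : Fin n => ¬ (v:ℕ) < n - α),
        Mm n α u v = if v = u then ((n:ℝ) - α) + ((α:ℝ) - 1)/2 else -(1/2) := by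
      intro v hv
      have hv' := (Finset.mem_filter.mp hv).2
      unfold Mm
      rcases eq_or_ne u v with h | h
      · subst h; simp [hu]
      · rw [if_neg h, if_neg (show ¬ v = u from fun e => h e.symm),
          if_neg (show ¬ ((u:ℕ) < n - α ∨ (v:ℕ) < n - α) from by tauto)]
    rw [Finset.sum_congr rfl key,
      sum_delta_const _ u (by simp only [mem_filter, mem_univ, true_and]; exact hu) _ _, hcard]
    push_cast; ring

lemma Mm_row_sum (u : Fin n) : ∑ v, Mm n α u v = 0 := by
  rw [← Finset.sum_filter_add_sum_filter_not univ (fun v : Fin n => (v:ℕ) < n - α),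
    Mm_sum_lt hα hαn, Mm_sum_ge hα hαn]
  by_cases hu : (u:ℕ) < n - α <;> simp [hu]

lemma Qm_sum_lt (r : Fin n) :
    ∑ v ∈ univ.filter (fun v : Fin n => (v:ℕ) < n - α), Qm n α r v =
      if (r:ℕ) = 0 then ((n:ℝ) - α)/n else if (r:ℕ) = n - α then 1/n else 0 := by
  have hk : n - α < n := by omega
  have hkR : ((n:ℝ) - α) ≠ 0 := by
    have : (α:ℝ) < n := by exact_mod_cast hαn
    linarith
  have hnR : (n:ℝ) ≠ 0 := Nat.cast_ne_zero.mpr (by omega)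
  by_cases hr0 : (r:ℕ) = 0
  · rw [if_pos hr0]
    have key : ∀ v ∈ univ.filter (fun v : Fin n => (v:ℕ) < n - α),
        Qm n α r v = 1/(n:ℝ) := by
      intro v hv; unfold Qm; rw [if_pos hr0]
    rw [Finset.sum_congr rfl key, Finset.sum_const, card_filter_lt _ hk, nsmul_eq_mul,
      Nat.cast_sub hαn.le]
    field_simp
  · rw [if_neg hr0]
    by_cases hrk : (r:ℕ) < n - α
    · rw [if_neg (by omega)]
      have key : ∀ v ∈ univ.filter (fun v : Fin n => (v:ℕ) < n - α),
          Qm n α r v = if v = r then 1 - 1/((n:ℝ) - α) else -(1/((n:ℝ) - α)) := by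
        intro v hv
        have hv' := (Finset.mem_filter.mp hv).2
        unfold Qm
        rw [if_neg hr0, if_pos hrk, if_pos hv']
        by_cases h : v = r
        · rw [if_pos h, if_pos h]; try ring
        · rw [if_neg h, if_neg h]; try ring
      rw [Finset.sum_congr rfl key,
        sum_delta_const _ r (by simp only [mem_filter, mem_univ, true_and]; exact hrk) _ _,
        card_filter_lt _ hk, Nat.cast_sub hαn.le]
      field_simp
      ring
    · by_cases hrk2 : (r:ℕ) = n - α
      · rw [if_pos hrk2]
        have key : ∀ v ∈ univ.filter (fun v : Fin n => (v:ℕ) < n - α),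
            Qm n α r v = 1/((n:ℝ)*((n:ℝ) - α)) := by
          intro v hv
          have hv' := (Finset.mem_filter.mp hv).2
          unfold Qm
          rw [if_neg hr0, if_neg hrk, if_pos hrk2, if_pos hv']
        rw [Finset.sum_congr rfl key, Finset.sum_const, card_filter_lt _ hk, nsmul_eq_mul,
          Nat.cast_sub hαn.le]
        field_simp
        try ring
      · rw [if_neg hrk2]
        have key : ∀ v ∈ univ.filter (fun v : Fin n => (v:ℕ) < n - α),
            Qm n α r v = 0 := by
          intro v hv
          have hv' := (Finset.mem_filter.mp hv).2
          unfold Qm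
          rw [if_neg hr0, if_neg hrk, if_neg hrk2, if_pos hv']
        rw [Finset.sum_congr rfl key, Finset.sum_const, smul_zero]

lemma Qm_sum_ge (r : Fin n) :
    ∑ v ∈ univ.filter (fun v : Fin n => ¬ (v:ℕ) < n - α), Qm n α r v =
      if (r:ℕ) = 0 then (α:ℝ)/n else if (r:ℕ) = n - α then -(1/n) else 0 := by
  have hk : n - α < n := by omega
  have hαR : (α:ℝ) ≠ 0 := Nat.cast_ne_zero.mpr (by omega)
  have hnR : (n:ℝ) ≠ 0 := Nat.cast_ne_zero.mpr (by omega)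
  have hcard : (univ.filter (fun v : Fin n => ¬ (v:ℕ) < n - α)).card = α := by
    rw [card_filter_not_lt _ hk]; omega
  by_cases hr0 : (r:ℕ) = 0
  · rw [if_pos hr0]
    have key : ∀ v ∈ univ.filter (fun v : Fin n => ¬ (v:ℕ) < n - α),
        Qm n α r v = 1/(n:ℝ) := by
      intro v hv; unfold Qm; rw [if_pos hr0]
    rw [Finset.sum_congr rfl key, Finset.sum_const, hcard, nsmul_eq_mul]
    field_simp
  · rw [if_neg hr0]
    by_cases hrk : (r:ℕ) < n - α
    · rw [if_neg (by omega)]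
      have key : ∀ v ∈ univ.filter (fun v : Fin n => ¬ (v:ℕ) < n - α),
          Qm n α r v = 0 := by
        intro v hv
        have hv' := (Finset.mem_filter.mp hv).2
        unfold Qm
        rw [if_neg hr0, if_pos hrk, if_neg hv']
      rw [Finset.sum_congr rfl key, Finset.sum_const, smul_zero]
    · by_cases hrk2 : (r:ℕ) = n - α
      · rw [if_pos hrk2]
        have key : ∀ v ∈ univ.filter (fun v : Fin n => ¬ (v:ℕ) < n - α),
            Qm n α r v = -(1/((n:ℝ)*α)) := by
          intro v hv
          have hv' := (Finset.mem_filter.mp hv).2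
          unfold Qm
          rw [if_neg hr0, if_neg hrk, if_pos hrk2, if_neg hv']
        rw [Finset.sum_congr rfl key, Finset.sum_const, hcard, nsmul_eq_mul]
        field_simp
        try ring
      · rw [if_neg hrk2]
        have key : ∀ v ∈ univ.filter (fun v : Fin n => ¬ (v:ℕ) < n - α),
            Qm n α r v = if v = r then 1 - 1/(α:ℝ) else -(1/(α:ℝ)) := by
          intro v hv
          have hv' := (Finset.mem_filter.mp hv).2
          unfold Qm
          rw [if_neg hr0, if_neg hrk, if_neg hrk2, if_neg hv']
          by_cases h : v = r
          · rw [if_pos h, if_pos h]; try ring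
          · rw [if_neg h, if_neg h]; try ring
        rw [Finset.sum_congr rfl key,
          sum_delta_const _ r (by simp only [mem_filter, mem_univ, true_and]; omega) _ _, hcard]
        field_simp
        ring

end RowSums

section Entries
variable {n α : ℕ} (hα : 1 ≤ α) (hαn : α < n)

lemma Mm_diag_lt {u : Fin n} (hu : (u:ℕ) < n - α) : Mm n α u u = (n:ℝ) - 1 := by
  unfold Mm; rw [if_pos rfl, if_pos hu]

lemma Mm_diag_ge {u : Fin n} (hu : ¬ (u:ℕ) < n - α) :
    Mm n α u u = ((n:ℝ) - α) + ((α:ℝ) - 1)/2 := by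
  unfold Mm; rw [if_pos rfl, if_neg hu]

lemma Mm_off1 {u v : Fin n} (h : u ≠ v) (h2 : (u:ℕ) < n - α ∨ (v:ℕ) < n - α) :
    Mm n α u v = -1 := by
  unfold Mm; rw [if_neg h, if_pos h2]

lemma Mm_off2 {u v : Fin n} (h : u ≠ v) (hu : ¬ (u:ℕ) < n - α) (hv : ¬ (v:ℕ) < n - α) :
    Mm n α u v = -(1/2) := by
  unfold Mm; rw [if_neg h, if_neg (by tauto)]

lemma Pm_colClique' {u c : Fin n} (hc0 : (c:ℕ) ≠ 0) (hck : (c:ℕ) < n - α) :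
    Pm n α u c = if u = c then 1 else if (u:ℕ) = 0 then -1 else 0 := by
  unfold Pm; rw [if_neg hc0, if_pos hck]

lemma Pm_colMid' {u c : Fin n} (hc : (c:ℕ) = n - α) (hk : 0 < n - α) :
    Pm n α u c = if (u:ℕ) < n - α then (α:ℝ) else -((n:ℝ) - α) := by
  unfold Pm; rw [if_neg (by omega), if_neg (by omega), if_pos hc]

lemma Pm_colIndep' {u c : Fin n} (hc : n - α < (c:ℕ)) :
    Pm n α u c = if u = c then 1 else if (u:ℕ) = n - α then -1 else 0 := by
  unfold Pm; rw [if_neg (by omega), if_neg (by omega), if_neg (by omega)]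

lemma Qm_row0 {r v : Fin n} (hr : (r:ℕ) = 0) : Qm n α r v = 1/n := by
  unfold Qm; rw [if_pos hr]

lemma Qm_rowClique {r v : Fin n} (hr0 : (r:ℕ) ≠ 0) (hrk : (r:ℕ) < n - α) :
    Qm n α r v = if (v:ℕ) < n - α then (if v = r then 1 else 0) - 1/((n:ℝ) - α) else 0 := by
  unfold Qm; rw [if_neg hr0, if_pos hrk]

lemma Qm_rowMid {r v : Fin n} (hr : (r:ℕ) = n - α) (hk : 0 < n - α) :
    Qm n α r v = if (v:ℕ) < n - α then 1/((n:ℝ)*((n:ℝ) - α)) else -(1/((n:ℝ)*α)) := by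
  unfold Qm; rw [if_neg (by omega), if_neg (by omega), if_pos hr]

lemma Qm_rowIndep {r v : Fin n} (hr : n - α < (r:ℕ)) :
    Qm n α r v = if (v:ℕ) < n - α then 0 else (if v = r then 1 else 0) - 1/(α:ℝ) := by
  unfold Qm; rw [if_neg (by omega), if_neg (by omega), if_neg (by omega)]

end Entries

section Products
variable {n α : ℕ} (hα : 1 ≤ α) (hαn : α < n)

include hα hαn

lemma MP_eq : Mm n α * Pm n α = Pm n α * Matrix.diagonal (dvec n α) := by
  have hk : 0 < n - α := by omega
  have hn0 : 0 < n := by omega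
  have hkn : n - α < n := by omega
  funext u c
  rw [Matrix.mul_apply, Matrix.mul_diagonal]
  by_cases hc0 : (c:ℕ) = 0
  · rw [mulP_col0 hα hαn (Mm n α) u c hc0, Mm_row_sum hα hαn]
    unfold dvec
    rw [if_pos hc0, mul_zero]
  · by_cases hck : (c:ℕ) < n - α
    · rw [mulP_colClique hα hαn (Mm n α) u c hc0 hck, Pm_colClique' hc0 hck]
      unfold dvec
      rw [if_neg (show ¬ (c:ℕ) = 0 from hc0), if_pos (show (c:ℕ) ≤ n - α by omega)]
      have hcc0 : c ≠ (⟨0, by omega⟩ : Fin n) := by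
        intro h; apply hc0; rw [h]
      rcases eq_or_ne u c with h | h
      · subst h
        rw [Mm_diag_lt hck, Mm_off1 hcc0 (Or.inl hck), if_pos rfl]
        ring
      · rw [if_neg h]
        by_cases h0 : (u:ℕ) = 0
        · have h2 : Mm n α u c = -1 := Mm_off1 h (Or.inr hck)
          have h3 : Mm n α u (⟨0, hn0⟩ : Fin n) = (n:ℝ) - 1 := by
            rw [show u = (⟨0, hn0⟩ : Fin n) from Fin.ext h0]
            exact Mm_diag_lt (by simpa using hk)
          rw [h2, h3, if_pos h0]
          ring
        · have h4 : u ≠ (⟨0, by omega⟩ : Fin n) := fun e => h0 (by rw [e])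
          rw [Mm_off1 h (Or.inr hck), Mm_off1 h4 (Or.inr (by simpa using hk)), if_neg h0]
          ring
    · by_cases hck2 : (c:ℕ) = n - α
      · rw [mulP_colMid hα hαn (Mm n α) u c hck2, Mm_sum_lt hα hαn, Mm_sum_ge hα hαn,
          Pm_colMid' hck2 hk]
        unfold dvec
        rw [if_neg (show ¬ (c:ℕ) = 0 by omega), if_pos (show (c:ℕ) ≤ n - α by omega)]
        by_cases hu : (u:ℕ) < n - α
        · rw [if_pos hu, if_pos hu]; ring
        · rw [if_neg hu, if_neg hu]; ring
      · have hck3 : n - α < (c:ℕ) := by omega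
        rw [mulP_colIndep hα hαn (Mm n α) u c hck3, Pm_colIndep' hck3]
        unfold dvec
        rw [if_neg (show ¬ (c:ℕ) = 0 by omega), if_neg (show ¬ (c:ℕ) ≤ n - α by omega)]
        have hcvk : c ≠ (⟨n - α, by omega⟩ : Fin n) := by
          intro h; have := congrArg Fin.val h; simp at this; omega
        rcases eq_or_ne u c with h | h
        · subst h
          rw [Mm_diag_ge (show ¬ (u:ℕ) < n - α by omega),
            Mm_off2 hcvk (show ¬ (u:ℕ) < n - α by omega)
              (show ¬ ((⟨n - α, by omega⟩ : Fin n) : ℕ) < n - α by simp), if_pos rfl]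
          ring
        · rw [if_neg h]
          by_cases hk2 : (u:ℕ) = n - α
          · have h2 : Mm n α u c = -(1/2) :=
              Mm_off2 h (show ¬ (u:ℕ) < n - α by omega) (show ¬ (c:ℕ) < n - α by omega)
            have h3 : Mm n α u (⟨n - α, hkn⟩ : Fin n) = ((n:ℝ) - α) + ((α:ℝ) - 1)/2 := by
              rw [show u = (⟨n - α, hkn⟩ : Fin n) from Fin.ext hk2]
              exact Mm_diag_ge (by simp)
            rw [h2, h3, if_pos hk2]
            ring
          · have h4 : u ≠ (⟨n - α, by omega⟩ : Fin n) := fun e => hk2 (by rw [e])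
            by_cases hu : (u:ℕ) < n - α
            · rw [Mm_off1 h (Or.inl hu), Mm_off1 h4 (Or.inl hu), if_neg hk2]
              ring
            · rw [Mm_off2 h hu (show ¬ (c:ℕ) < n - α by omega),
                Mm_off2 h4 hu (show ¬ ((⟨n - α, by omega⟩ : Fin n) : ℕ) < n - α by simp),
                if_neg hk2]
              ring

lemma QP_eq : Qm n α * Pm n α = 1 := by
  have hk : 0 < n - α := by omega
  have hnR : (n:ℝ) ≠ 0 := Nat.cast_ne_zero.mpr (by omega)
  have hαR : (α:ℝ) ≠ 0 := Nat.cast_ne_zero.mpr (by omega)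
  have hkR : ((n:ℝ) - α) ≠ 0 := by
    have : (α:ℝ) < n := by exact_mod_cast hαn
    linarith
  funext r c
  rw [Matrix.mul_apply, Matrix.one_apply]
  by_cases hc0 : (c:ℕ) = 0
  · rw [mulP_col0 hα hαn (Qm n α) r c hc0,
      ← Finset.sum_filter_add_sum_filter_not univ (fun v : Fin n => (v:ℕ) < n - α),
      Qm_sum_lt hα hαn, Qm_sum_ge hα hαn]
    by_cases hr0 : (r:ℕ) = 0
    · have hrc : r = c := Fin.ext (by omega)
      rw [if_pos hr0, if_pos hr0, if_pos hrc]
      field_simp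
      ring
    · have hrc : r ≠ c := fun e => hr0 (by rw [e]; exact hc0)
      rw [if_neg hr0, if_neg hr0, if_neg hrc]
      by_cases hrk : (r:ℕ) = n - α
      · rw [if_pos hrk, if_pos hrk]; try ring
      · rw [if_neg hrk, if_neg hrk]; try ring
  · by_cases hck : (c:ℕ) < n - α
    · rw [mulP_colClique hα hαn (Qm n α) r c hc0 hck]
      have h0lt : ((⟨0, by omega⟩ : Fin n) : ℕ) < n - α := by simpa using hk
      by_cases hr0 : (r:ℕ) = 0
      · have hrc : r ≠ c := fun e => hc0 (by rw [← e]; exact hr0)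
        rw [Qm_row0 hr0, Qm_row0 hr0, if_neg hrc]
        try ring
      · by_cases hrk : (r:ℕ) < n - α
        · rw [Qm_rowClique hr0 hrk, Qm_rowClique hr0 hrk, if_pos hck, if_pos h0lt]
          have h0r : (⟨0, by omega⟩ : Fin n) ≠ r := by
            intro h; apply hr0; rw [← h]
          rw [if_neg h0r]
          rcases eq_or_ne r c with h | h
          · rw [if_pos h, if_pos h.symm]; try ring
          · rw [if_neg h, if_neg (fun e => h e.symm)]; try ring
        · by_cases hrk2 : (r:ℕ) = n - α
          · have hrc : r ≠ c := by intro e; rw [← e] at hck; omega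
            rw [Qm_rowMid hrk2 hk, Qm_rowMid hrk2 hk, if_pos hck, if_pos h0lt, if_neg hrc]
            try ring
          · have hrk3 : n - α < (r:ℕ) := by omega
            have hrc : r ≠ c := by intro e; rw [← e] at hck; omega
            rw [Qm_rowIndep hrk3, Qm_rowIndep hrk3, if_pos hck, if_pos h0lt, if_neg hrc]
            try ring
    · by_cases hck2 : (c:ℕ) = n - α
      · rw [mulP_colMid hα hαn (Qm n α) r c hck2, Qm_sum_lt hα hαn, Qm_sum_ge hα hαn]
        by_cases hr0 : (r:ℕ) = 0
        · have hrc : r ≠ c := by intro e; rw [e] at hr0; omega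
          rw [if_pos hr0, if_pos hr0, if_neg hrc]
          ring
        · by_cases hrk2 : (r:ℕ) = n - α
          · have hrc : r = c := Fin.ext (by omega)
            rw [if_neg hr0, if_neg hr0, if_pos hrk2, if_pos hrk2, if_pos hrc]
            field_simp
            try ring
          · have hrc : r ≠ c := by intro e; apply hrk2; rw [e]; exact hck2
            rw [if_neg hr0, if_neg hr0, if_neg hrk2, if_neg hrk2, if_neg hrc]
            ring
      · have hck3 : n - α < (c:ℕ) := by omega
        rw [mulP_colIndep hα hαn (Qm n α) r c hck3]
        have hcnot : ¬ (c:ℕ) < n - α := by omega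
        have hvknot : ¬ ((⟨n - α, by omega⟩ : Fin n) : ℕ) < n - α := by simp
        by_cases hr0 : (r:ℕ) = 0
        · have hrc : r ≠ c := by intro e; rw [e] at hr0; omega
          rw [Qm_row0 hr0, Qm_row0 hr0, if_neg hrc]
          try ring
        · by_cases hrk : (r:ℕ) < n - α
          · have hrc : r ≠ c := by intro e; rw [← e] at hck3; omega
            rw [Qm_rowClique hr0 hrk, Qm_rowClique hr0 hrk, if_neg hcnot, if_neg hvknot,
              if_neg hrc]
            try ring
          · by_cases hrk2 : (r:ℕ) = n - α
            · have hrc : r ≠ c := by intro e; rw [← e] at hck3; omega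
              rw [Qm_rowMid hrk2 hk, Qm_rowMid hrk2 hk, if_neg hcnot, if_neg hvknot, if_neg hrc]
              try ring
            · have hrk3 : n - α < (r:ℕ) := by omega
              rw [Qm_rowIndep hrk3, Qm_rowIndep hrk3, if_neg hcnot, if_neg hvknot]
              have hvkr : (⟨n - α, by omega⟩ : Fin n) ≠ r := by
                intro h; have := congrArg Fin.val h; simp at this; omega
              rw [if_neg hvkr]
              rcases eq_or_ne r c with h | h
              · rw [if_pos h.symm, if_pos h]; try ring
              · rw [if_neg (fun e => h e.symm), if_neg h]; try ring

end Products

section Charpoly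

lemma charpoly_conj {N : ℕ} (A P Q : Matrix (Fin N) (Fin N) ℝ) (h1 : P * Q = 1) :
    (P * A * Q).charpoly = A.charpoly := by
  let φ := (Polynomial.C : ℝ →+* ℝ[X]).mapMatrix (m := Fin N)
  have hφ1 : φ P * φ Q = 1 := by rw [← _root_.map_mul, h1, _root_.map_one]
  have hs : Matrix.scalar (Fin N) (X : ℝ[X]) = (X : ℝ[X]) • (1 : Matrix (Fin N) (Fin N) ℝ[X]) := by
    rw [Matrix.scalar_apply]
    ext i j
    by_cases h : i = j
    · subst h; simp
    · simp [Matrix.diagonal_apply_ne _ h, Matrix.one_apply_ne h]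
  have key : charmatrix (P * A * Q) = φ P * charmatrix A * φ Q := by
    show Matrix.scalar (Fin N) (X : ℝ[X]) - φ (P * A * Q)
      = φ P * (Matrix.scalar (Fin N) (X : ℝ[X]) - φ A) * φ Q
    rw [_root_.map_mul, _root_.map_mul, mul_sub, sub_mul, hs]
    congr 1
    rw [mul_smul_comm, smul_mul_assoc, mul_one, hφ1]
  rw [Matrix.charpoly, Matrix.charpoly, key, Matrix.det_mul, Matrix.det_mul]
  have hdet : (φ P).det * (φ Q).det = 1 := by rw [← Matrix.det_mul, hφ1, Matrix.det_one]
  calc (φ P).det * (charmatrix A).det * (φ Q).det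
      = (charmatrix A).det * ((φ P).det * (φ Q).det) := by ring
    _ = (charmatrix A).det := by rw [hdet, mul_one]

lemma charpoly_diag {N : ℕ} (d : Fin N → ℝ) :
    (Matrix.diagonal d).charpoly = ∏ i, (X - C (d i)) := by
  rw [Matrix.charpoly_of_upperTriangular (Matrix.diagonal d)
    (Matrix.blockTriangular_diagonal d : (Matrix.diagonal d).BlockTriangular id)]
  exact Finset.prod_congr rfl (fun i _ => by rw [Matrix.diagonal_apply_eq])

end Charpoly

section MultisetLemma
variable {n α : ℕ} (hα : 1 ≤ α) (hαn : α < n)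

include hα hαn in
lemma dvec_multiset : Multiset.map (dvec n α) Finset.univ.val =
    ((0:ℝ) ::ₘ Multiset.replicate (n - α) (n:ℝ)) + Multiset.replicate (α - 1) ((n:ℝ) - (α:ℝ)/2) := by
  have h1 : Multiset.map (dvec n α) Finset.univ.val =
      Multiset.map (fun x : ℕ => if x = 0 then (0:ℝ) else if x ≤ n - α then (n:ℝ) else (n:ℝ) - (α:ℝ)/2)
        (Multiset.map Fin.val (Finset.univ.val : Multiset (Fin n))) := by
    rw [Multiset.map_map]
    exact Multiset.map_congr rfl (fun i _ => rfl)
  have h2 : Multiset.map Fin.val (Finset.univ.val : Multiset (Fin n)) =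
      (Finset.range n).val := by
    rw [← Nat.Iio_eq_range, ← Fin.map_valEmbedding_univ, Finset.map_val]
    rfl
  rw [h1, h2]
  have hsplit : (Finset.range n).val =
      (Finset.Ico 0 1).val + (Finset.Ico 1 (n - α + 1)).val + (Finset.Ico (n - α + 1) n).val := by
    have d1 : Disjoint (Finset.Ico 0 1) (Finset.Ico 1 (n - α + 1)) :=
      Finset.Ico_disjoint_Ico_consecutive 0 1 (n - α + 1)
    have d2 : Disjoint (Finset.Ico 0 (n - α + 1)) (Finset.Ico (n - α + 1) n) :=
      Finset.Ico_disjoint_Ico_consecutive 0 (n - α + 1) n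
    have e1 : Finset.Ico 0 1 ∪ Finset.Ico 1 (n - α + 1) = Finset.Ico 0 (n - α + 1) :=
      Finset.Ico_union_Ico_eq_Ico (by omega) (by omega)
    have e2 : Finset.Ico 0 (n - α + 1) ∪ Finset.Ico (n - α + 1) n = Finset.Ico 0 n :=
      Finset.Ico_union_Ico_eq_Ico (by omega) (by omega)
    calc (Finset.range n).val
        = ((Finset.Ico 0 (n - α + 1)).disjUnion (Finset.Ico (n - α + 1) n) d2).val := by
          rw [Finset.range_eq_Ico, ← e2, Finset.disjUnion_eq_union]
      _ = (Finset.Ico 0 (n - α + 1)).val + (Finset.Ico (n - α + 1) n).val := rfl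
      _ = ((Finset.Ico 0 1).disjUnion (Finset.Ico 1 (n - α + 1)) d1).val
            + (Finset.Ico (n - α + 1) n).val := by
          rw [Finset.disjUnion_eq_union, e1]
      _ = (Finset.Ico 0 1).val + (Finset.Ico 1 (n - α + 1)).val
            + (Finset.Ico (n - α + 1) n).val := rfl
  rw [hsplit, Multiset.map_add, Multiset.map_add]
  have p1 : Multiset.map
      (fun x : ℕ => if x = 0 then (0:ℝ) else if x ≤ n - α then (n:ℝ) else (n:ℝ) - (α:ℝ)/2)
      (Finset.Ico 0 1).val = {(0:ℝ)} := by
    have h01 : (Finset.Ico 0 1 : Finset ℕ) = {0} := by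
      rw [← Finset.range_one, Finset.range_eq_Ico]
    rw [h01]
    simp
  have p2 : Multiset.map
      (fun x : ℕ => if x = 0 then (0:ℝ) else if x ≤ n - α then (n:ℝ) else (n:ℝ) - (α:ℝ)/2)
      (Finset.Ico 1 (n - α + 1)).val = Multiset.replicate (n - α) (n:ℝ) := by
    rw [Multiset.map_congr rfl (fun x hx => by
      have hx' : 1 ≤ x ∧ x < n - α + 1 := Finset.mem_Ico.mp hx
      rw [if_neg (by omega), if_pos (by omega)])]
    rw [Multiset.map_const']
    congr 1
    have : (Finset.Ico 1 (n - α + 1)).val.card = (Finset.Ico 1 (n - α + 1)).card := rfl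
    rw [this, Nat.card_Ico]
    omega
  have p3 : Multiset.map
      (fun x : ℕ => if x = 0 then (0:ℝ) else if x ≤ n - α then (n:ℝ) else (n:ℝ) - (α:ℝ)/2)
      (Finset.Ico (n - α + 1) n).val = Multiset.replicate (α - 1) ((n:ℝ) - (α:ℝ)/2) := by
    rw [Multiset.map_congr rfl (fun x hx => by
      have hx' : n - α + 1 ≤ x ∧ x < n := Finset.mem_Ico.mp hx
      rw [if_neg (by omega), if_neg (by omega)])]
    rw [Multiset.map_const']
    congr 1
    have : (Finset.Ico (n - α + 1) n).val.card = (Finset.Ico (n - α + 1) n).card := rfl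
    rw [this, Nat.card_Ico]
    omega
  rw [p1, p2, p3, Multiset.singleton_add]

end MultisetLemma

theorem stmt14 (n α : ℕ) (hα : 1 ≤ α) (hαn : α < n) :
    (RDL (completeSplitGraph n α)).charpoly.roots =
      0 ::ₘ Multiset.replicate (n - α) (n : ℝ) +
        Multiset.replicate (α - 1) ((n : ℝ) - (α : ℝ) / 2) := by
  rw [RDL_eq hα hαn]
  have hQP : Qm n α * Pm n α = 1 := QP_eq hα hαn
  have hPQ : Pm n α * Qm n α = 1 := mul_eq_one_comm.mp hQP
  have hM : Mm n α = Pm n α * Matrix.diagonal (dvec n α) * Qm n α := by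
    calc Mm n α = Mm n α * (Pm n α * Qm n α) := by rw [hPQ, mul_one]
      _ = (Mm n α * Pm n α) * Qm n α := by rw [mul_assoc]
      _ = Pm n α * Matrix.diagonal (dvec n α) * Qm n α := by rw [MP_eq hα hαn]
  rw [hM, charpoly_conj _ _ _ hPQ, charpoly_diag]
  have hprod : ∏ i : Fin n, (X - C (dvec n α i)) =
      ((Multiset.map (dvec n α) Finset.univ.val).map (fun r : ℝ => X - C r)).prod := by
    rw [Multiset.map_map, Finset.prod_eq_multiset_prod]
    rfl
  rw [hprod, Polynomial.roots_multiset_prod_X_sub_C, dvec_multiset hα hαn]
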